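/- Let 𝒯 be a ℤ/m-graded triangulated category (1 ≤ m ≤ ∞) and let R be a commutative Noetherian ring acting centrally on 𝒯. Suppose G is a split-generator of 𝒯 such that Hom^•(G, G) is a Noetherian R-module. Then Hom^•(X, Y) is a Noetherian R-module for all objects X, Y of 𝒯. -/

import Mathlib

open CategoryTheory Category Limits Pretriangulated DirectSum

universe v u

namespace RouquierDim

variable {C : Type u} [Category.{v} C] [Preadditive C] [HasZeroObject C]
  [HasShift C ℤ] [∀ n : ℤ, (shiftFunctor C n).Additive] [Pretriangulated C]
  [HasBinaryBiproducts C]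

/-- `Z` is a summand of `K`: there are maps `r : Z ⟶ K`, `k : K ⟶ Z` with `r ≫ k = 𝟙 Z`. -/
def IsSummand (Z K : C) : Prop := ∃ (r : Z ⟶ K) (k : K ⟶ Z), r ≫ k = 𝟙 Z

/-- The subcategory `ℐ * 𝒥`: objects `K` admitting a distinguished triangle
`K₀ ⟶ K ⟶ K₁ ⟶ K₀⟦1⟧` with `K₀ ∈ ℐ` and `K₁ ∈ 𝒥`. -/
def star (I J : Set C) : Set C :=
  {K | ∃ (K₀ K₁ : C) (f : K₀ ⟶ K) (g : K ⟶ K₁) (h : K₁ ⟶ K₀⟦(1 : ℤ)⟧),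
    Triangle.mk f g h ∈ (distTriang C) ∧ K₀ ∈ I ∧ K₁ ∈ J}

/-- Membership in `⟨ℐ⟩`, the smallest strictly full subcategory containing `ℐ` and
closed under finite direct sums, shifts, and summands. -/
inductive angleMem (I : Set C) : C → Prop
  | of {X : C} (hX : X ∈ I) : angleMem I X
  | zero {X : C} (hX : IsZero X) : angleMem I X
  | shift {X : C} (n : ℤ) (hX : angleMem I X) : angleMem I (X⟦n⟧)
  | sum {X Y : C} (hX : angleMem I X) (hY : angleMem I Y) : angleMem I (X ⊞ Y)
  | smd {X Y : C} (h : IsSummand X Y) (hY : angleMem I Y) : angleMem I X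
  | iso {X Y : C} (e : X ≅ Y) (hX : angleMem I X) : angleMem I Y

/-- `⟨ℐ⟩` as a set of objects. -/
def angle (I : Set C) : Set C := {X | angleMem I X}

/-- `⟨ℐ⟩_n` for `n ≥ 1`: `⟨ℐ⟩_1 = ⟨ℐ⟩`, `⟨ℐ⟩_{n+1} = ⟨⟨ℐ⟩_n * ⟨ℐ⟩⟩`. (Value `∅` at `n = 0`.) -/
def angleN (I : Set C) : ℕ → Set C
  | 0 => ∅
  | 1 => angle I
  | (n + 2) => angle (star (angleN I (n + 1)) (angle I))

/-- `G` is a split-generator of the triangulated category `C`: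
`C = ⟨G⟩_n` for some `n ∈ ℕ`. -/
def IsSplitGenerator (G : C) : Prop := ∃ n : ℕ, angleN {G} n = Set.univ

/-- A central action of a commutative ring `R` on the (`ℤ/m`-graded) triangulated
category `C`: a ring homomorphism `φ K : R →+* End K` for every object `K`, natural in `K`
and compatible with the shift. -/
structure CentralAction (R : Type*) [CommRing R] where
  φ : ∀ K : C, R →+* End K
  natural : ∀ {K L : C} (f : K ⟶ L) (r : R), φ K r ≫ f = f ≫ φ L r
  shift_comm : ∀ (K : C) (r : R) (n : ℤ), φ (K⟦n⟧) r = (φ K r)⟦n⟧'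

variable {R : Type*} [CommRing R]

/-- The `R`-module structure on `Hom(X, Y)` induced by a central action:
`r • f = f ≫ φ Y r` (equivalently, `φ X r ≫ f`, by naturality). -/
def CentralAction.homModule (A : CentralAction (C := C) R) (X Y : C) :
    Module R (X ⟶ Y) :=
  Module.compHom (X ⟶ Y) (A.φ Y)

/-- `Hom^•(X, Y) = ⊕_{i ∈ ℤ/m} Hom(X, Σ^i Y)` as an `R`-module, for the `ℤ/m`-graded
triangulated category `C` (`m = 0` encodes `m = ∞`, in which case `ℤ/m = ℤ`), packaged
as an object of `ModuleCat R`. -/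
noncomputable def CentralAction.HomBullet (A : CentralAction (C := C) R) (m : ℕ)
    (X Y : C) : ModuleCat R :=
  letI : ∀ i : ZMod m, Module R (X ⟶ Y⟦(ZMod.cast i : ℤ)⟧) := fun _ => A.homModule _ _
  ModuleCat.of R (⨁ i : ZMod m, (X ⟶ Y⟦(ZMod.cast i : ℤ)⟧))

section Auxiliary

variable {R : Type*} [CommRing R]

section DS

variable {ι κ : Type*} [DecidableEq ι] [DecidableEq κ]

/-- If `⨁ N` is Noetherian and each `M i` embeds into `N (e i)` for an injection `e`,
then `⨁ M` is Noetherian. -/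
lemma isNoetherian_directSum_of_embedding {M : ι → Type*} {N : κ → Type*}
    [∀ i, AddCommGroup (M i)] [∀ k, AddCommGroup (N k)]
    [∀ i, Module R (M i)] [∀ k, Module R (N k)]
    (e : ι → κ) (he : Function.Injective e)
    (f : ∀ i, M i →ₗ[R] N (e i)) (hf : ∀ i, Function.Injective (f i))
    (hN : IsNoetherian R (⨁ k, N k)) : IsNoetherian R (⨁ i, M i) := by
  classical
  let Φ : (⨁ i, M i) →ₗ[R] ⨁ k, N k :=
    DirectSum.toModule R ι _ (fun i => (DirectSum.lof R κ N (e i)).comp (f i))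
  have key : ∀ (x : ⨁ i, M i) (i : ι), Φ x (e i) = f i (x i) := by
    intro x i
    have h2 : (DirectSum.component R κ N (e i)).comp Φ
        = (f i).comp (DirectSum.component R ι M i) := by
      apply DirectSum.linearMap_ext
      intro j
      ext y
      have hPhi : Φ (DirectSum.of M j y) = DirectSum.of N (e j) (f j y) := by
        have := DirectSum.toModule_lof (R := R) (ι := ι) (N := ⨁ k, N k)
          (φ := fun i => (DirectSum.lof R κ N (e i)).comp (f i)) j y
        simpa [DirectSum.lof_eq_of] using this
      by_cases hji : j = i
      · subst hji
        simp [← DirectSum.apply_eq_component, DirectSum.lof_eq_of, hPhi,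
          DirectSum.of_eq_same]
      · have hne : e j ≠ e i := fun h => hji (he h)
        simp [← DirectSum.apply_eq_component, hPhi, DirectSum.lof_eq_of,
          DirectSum.of_eq_of_ne _ _ _ hne.symm, DirectSum.of_eq_of_ne _ _ _ (Ne.symm hji)]
    have := DFunLike.congr_fun h2 x
    simpa [← DirectSum.apply_eq_component] using this
  have hinj : Function.Injective Φ := by
    rw [injective_iff_map_eq_zero]
    intro x hx
    refine DFinsupp.ext fun i => ?_
    apply hf i
    rw [← key x i, hx]
    simp
  haveI := hN
  exact isNoetherian_of_injective Φ hinj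

/-- If `⨁ M` and `⨁ P` are Noetherian and `M i ⟶ N i ⟶ P i` is exact for all `i`,
then `⨁ N` is Noetherian. -/
lemma isNoetherian_directSum_of_exact {M N P : ι → Type*}
    [∀ i, AddCommGroup (M i)] [∀ i, AddCommGroup (N i)] [∀ i, AddCommGroup (P i)]
    [∀ i, Module R (M i)] [∀ i, Module R (N i)] [∀ i, Module R (P i)]
    (u : ∀ i, M i →ₗ[R] N i) (v : ∀ i, N i →ₗ[R] P i)
    (hex : ∀ i, LinearMap.range (u i) = LinearMap.ker (v i))
    (hM : IsNoetherian R (Π₀ i, M i)) (hP : IsNoetherian R (Π₀ i, P i)) :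
    IsNoetherian R (Π₀ i, N i) := by
  classical
  have mapRange_apply' : ∀ (x : Π₀ i, M i) (i : ι),
      (DFinsupp.mapRange.linearMap u) x i = u i (x i) := fun x i =>
    DFinsupp.mapRange_apply (fun i (m : M i) => u i m) (fun i => (u i).map_zero) x i
  have mapRange_apply'' : ∀ (x : Π₀ i, N i) (i : ι),
      (DFinsupp.mapRange.linearMap v) x i = v i (x i) := fun x i =>
    DFinsupp.mapRange_apply (fun i (m : N i) => v i m) (fun i => (v i).map_zero) x i
  haveI := hM
  haveI := hP
  refine isNoetherian_of_range_eq_ker (DFinsupp.mapRange.linearMap u)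
    (DFinsupp.mapRange.linearMap v) ?_
  ext x
  simp only [LinearMap.mem_range, LinearMap.mem_ker]
  constructor
  · rintro ⟨y, rfl⟩
    refine DFinsupp.ext fun i => ?_
    rw [DFinsupp.zero_apply, mapRange_apply'', mapRange_apply']
    have : u i (y i) ∈ LinearMap.ker (v i) := (hex i) ▸ LinearMap.mem_range_self _ _
    simpa using this
  · intro hx
    have hxe : ∀ i, x i ∈ LinearMap.range (u i) := by
      intro i
      rw [hex i, LinearMap.mem_ker]
      rw [← mapRange_apply'' x i, hx]
      simp
    choose y hy using fun i => LinearMap.mem_range.mp (hxe i)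
    refine ⟨∑ i ∈ x.support, DFinsupp.single i (y i), ?_⟩
    rw [map_sum]
    have hterm : ∀ i, (DFinsupp.mapRange.linearMap u) (DFinsupp.single i (y i))
        = DFinsupp.single i (x i) := by
      intro i
      have : (DFinsupp.mapRange.linearMap u) (DFinsupp.single i (y i))
          = DFinsupp.mapRange (fun i x => u i x) (fun i => (u i).map_zero)
            (DFinsupp.single i (y i)) := rfl
      rw [this, DFinsupp.mapRange_single, hy]
    simp_rw [hterm]
    conv_rhs => rw [← DFinsupp.sum_single (f := x)]
    rfl

end DS


section ShiftPeriod

variable {C : Type u} [Category.{v} C] [HasShift C ℤ]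

lemma shift_natIso_of_dvd {m : ℕ} (e : shiftFunctor C (m : ℤ) ≅ 𝟭 C) (a : ℤ)
    (ha : (m : ℤ) ∣ a) : Nonempty (shiftFunctor C a ≅ 𝟭 C) := by
  obtain ⟨k, rfl⟩ := ha
  have eneg : shiftFunctor C (-(m : ℤ)) ≅ 𝟭 C :=
    (Functor.rightUnitor _).symm ≪≫ Functor.isoWhiskerLeft _ e.symm ≪≫
      (shiftFunctorAdd' C (-(m : ℤ)) (m : ℤ) 0 (by ring)).symm ≪≫ shiftFunctorZero C ℤ
  induction k using Int.induction_on with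
  | zero => exact ⟨shiftFunctorZero' C _ (by ring)⟩
  | succ i ih =>
      obtain ⟨f⟩ := ih
      exact ⟨shiftFunctorAdd' C ((m : ℤ) * i) (m : ℤ) ((m : ℤ) * (i + 1)) (by ring) ≪≫
        Functor.isoWhiskerRight f _ ≪≫ Functor.leftUnitor _ ≪≫ e⟩
  | pred i ih =>
      obtain ⟨f⟩ := ih
      exact ⟨shiftFunctorAdd' C ((m : ℤ) * (-i)) (-(m : ℤ)) ((m : ℤ) * (-i - 1)) (by ring) ≪≫
        Functor.isoWhiskerRight f _ ≪≫ Functor.leftUnitor _ ≪≫ eneg⟩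

lemma shiftObjIso {m : ℕ} (e : shiftFunctor C (m : ℤ) ≅ 𝟭 C) {a b : ℤ}
    (h : ((a : ZMod m)) = ((b : ZMod m))) (Y : C) : Nonempty ((Y⟦a⟧ : C) ≅ Y⟦b⟧) := by
  have hd : (m : ℤ) ∣ (b - a) := by
    rw [← ZMod.intCast_zmod_eq_zero_iff_dvd]
    push_cast
    rw [sub_eq_zero]
    exact h.symm
  obtain ⟨f⟩ := shift_natIso_of_dvd e (b - a) hd
  exact ⟨(f.app (Y⟦a⟧)).symm ≪≫ ((shiftFunctorAdd' C a (b - a) b (by ring)).app Y).symm⟩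

end ShiftPeriod

namespace CentralAction

variable {C : Type u} [Category.{v} C] [Preadditive C] [HasZeroObject C]
  [HasShift C ℤ] [∀ n : ℤ, (shiftFunctor C n).Additive] [Pretriangulated C]
  [HasBinaryBiproducts C]

variable (A : CentralAction (C := C) R)

/-- Post-composition as an `R`-linear map. -/
noncomputable def postcompₗ (X : C) {Y Z : C} (g : Y ⟶ Z) :
    letI := A.homModule X Y; letI := A.homModule X Z
    (X ⟶ Y) →ₗ[R] (X ⟶ Z) :=
  letI := A.homModule X Y; letI := A.homModule X Z
  { toFun := fun f => f ≫ g
    map_add' := fun _ _ => Preadditive.add_comp _ _ _ _ _ _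
    map_smul' := fun r f => by
      show (f ≫ A.φ Y r) ≫ g = (f ≫ g) ≫ A.φ Z r
      rw [Category.assoc, Category.assoc, A.natural g r] }

/-- Pre-composition as an `R`-linear map. -/
noncomputable def precompₗ {X X' : C} (g : X' ⟶ X) (Y : C) :
    letI := A.homModule X Y; letI := A.homModule X' Y
    (X ⟶ Y) →ₗ[R] (X' ⟶ Y) :=
  letI := A.homModule X Y; letI := A.homModule X' Y
  { toFun := fun f => g ≫ f
    map_add' := fun _ _ => Preadditive.comp_add _ _ _ _ _ _
    map_smul' := fun r f => (Category.assoc _ _ _).symm }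

/-- The shift adjunction `(X⟦n⟧ ⟶ Y) ≃ (X ⟶ Y⟦-n⟧)` as an `R`-linear equivalence. -/
noncomputable def leftShiftEquivₗ (X Y : C) (n : ℤ) :
    letI := A.homModule ((X⟦n⟧ : C)) Y; letI := A.homModule X ((Y⟦-n⟧ : C))
    ((X⟦n⟧ : C) ⟶ Y) ≃ₗ[R] (X ⟶ (Y⟦-n⟧ : C)) :=
  letI := A.homModule ((X⟦n⟧ : C)) Y; letI := A.homModule X ((Y⟦-n⟧ : C))
  { toFun := fun f => ((shiftEquiv C n).toAdjunction.homEquiv X Y) f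
    invFun := fun g => ((shiftEquiv C n).toAdjunction.homEquiv X Y).symm g
    left_inv := fun f => ((shiftEquiv C n).toAdjunction.homEquiv X Y).left_inv f
    right_inv := fun g => ((shiftEquiv C n).toAdjunction.homEquiv X Y).right_inv g
    map_add' := fun f g => by
      have hadd : (shiftEquiv C n).inverse.map (f + g)
          = (shiftEquiv C n).inverse.map f + (shiftEquiv C n).inverse.map g :=
        (shiftFunctor C (-n)).map_add
      have key : ∀ f' g' : (shiftEquiv C n).functor.obj X ⟶ Y,
          (shiftEquiv C n).toAdjunction.homEquiv X Y (f' + g')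
            = (shiftEquiv C n).toAdjunction.homEquiv X Y f'
              + (shiftEquiv C n).toAdjunction.homEquiv X Y g' := by
        intro f' g'
        have h2 : (shiftEquiv C n).inverse.map (f' + g')
            = (shiftEquiv C n).inverse.map f' + (shiftEquiv C n).inverse.map g' :=
          (shiftFunctor C (-n)).map_add
        simp only [Adjunction.homEquiv_unit]
        rw [h2, Preadditive.comp_add]
      exact key f g
    map_smul' := fun r f => by
      show ((shiftEquiv C n).toAdjunction.homEquiv X Y) (f ≫ A.φ Y r)
        = ((shiftEquiv C n).toAdjunction.homEquiv X Y) f ≫ A.φ ((Y⟦-n⟧ : C)) r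
      have key : ∀ f' : (shiftEquiv C n).functor.obj X ⟶ Y,
          (shiftEquiv C n).toAdjunction.homEquiv X Y (f' ≫ A.φ Y r)
            = (shiftEquiv C n).toAdjunction.homEquiv X Y f' ≫ A.φ ((Y⟦-n⟧ : C)) r := by
        intro f'
        rw [Adjunction.homEquiv_naturality_right, A.shift_comm]
        rfl
      exact key f }

variable (m : ℕ)

/-- Transfer Noetherianness of `Hom^•` along componentwise injections. -/
lemma homBullet_noeth_of_injections {X X' Y Y' : C} (e : ZMod m → ZMod m)
    (he : Function.Injective e)
    (f : ∀ i : ZMod m,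
      letI := A.homModule X' (Y'⟦(ZMod.cast i : ℤ)⟧)
      letI := A.homModule X (Y⟦(ZMod.cast (e i) : ℤ)⟧)
      ((X' ⟶ Y'⟦(ZMod.cast i : ℤ)⟧) →ₗ[R] (X ⟶ Y⟦(ZMod.cast (e i) : ℤ)⟧)))
    (hf : ∀ i, Function.Injective (f i))
    (h : IsNoetherian R (A.HomBullet m X Y)) : IsNoetherian R (A.HomBullet m X' Y') := by
  letI : ∀ i : ZMod m, Module R (X ⟶ Y⟦(ZMod.cast i : ℤ)⟧) := fun _ => A.homModule _ _
  letI : ∀ i : ZMod m, Module R (X' ⟶ Y'⟦(ZMod.cast i : ℤ)⟧) := fun _ => A.homModule _ _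
  have h' : IsNoetherian R (⨁ i : ZMod m, (X ⟶ Y⟦(ZMod.cast i : ℤ)⟧)) := h
  show IsNoetherian R (⨁ i : ZMod m, (X' ⟶ Y'⟦(ZMod.cast i : ℤ)⟧))
  exact isNoetherian_directSum_of_embedding e he f hf h'

lemma noeth_zero_left {X : C} (Y : C) (hX : IsZero X) :
    IsNoetherian R (A.HomBullet m X Y) := by
  letI : ∀ i : ZMod m, Module R (X ⟶ Y⟦(ZMod.cast i : ℤ)⟧) := fun _ => A.homModule _ _
  haveI : Subsingleton (⨁ i : ZMod m, (X ⟶ Y⟦(ZMod.cast i : ℤ)⟧)) :=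
    ⟨fun a b => DFinsupp.ext fun i => hX.eq_of_src _ _⟩
  show IsNoetherian R (⨁ i : ZMod m, (X ⟶ Y⟦(ZMod.cast i : ℤ)⟧))
  infer_instance

lemma noeth_zero_right (X : C) {Y : C} (hY : IsZero Y) :
    IsNoetherian R (A.HomBullet m X Y) := by
  letI : ∀ i : ZMod m, Module R (X ⟶ Y⟦(ZMod.cast i : ℤ)⟧) := fun _ => A.homModule _ _
  haveI : Subsingleton (⨁ i : ZMod m, (X ⟶ Y⟦(ZMod.cast i : ℤ)⟧)) :=
    ⟨fun a b => DFinsupp.ext fun i =>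
      ((shiftFunctor C (ZMod.cast i : ℤ)).map_isZero hY).eq_of_tgt _ _⟩
  show IsNoetherian R (⨁ i : ZMod m, (X ⟶ Y⟦(ZMod.cast i : ℤ)⟧))
  infer_instance

lemma noeth_iso_right {X Y Y' : C} (eY : Y ≅ Y') (h : IsNoetherian R (A.HomBullet m X Y)) :
    IsNoetherian R (A.HomBullet m X Y') := by
  refine A.homBullet_noeth_of_injections m id Function.injective_id
    (fun i => A.postcompₗ X ((shiftFunctor C (ZMod.cast i : ℤ)).map eY.inv))
    (fun i a b hab => ?_) h
  have hab' : a ≫ (shiftFunctor C (ZMod.cast i : ℤ)).map eY.inv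
      = b ≫ (shiftFunctor C (ZMod.cast i : ℤ)).map eY.inv := hab
  have := congrArg (fun t => t ≫ (shiftFunctor C (ZMod.cast i : ℤ)).map eY.hom) hab'
  simpa [← Functor.map_comp] using this

lemma noeth_iso_left {X X' Y : C} (eX : X ≅ X') (h : IsNoetherian R (A.HomBullet m X Y)) :
    IsNoetherian R (A.HomBullet m X' Y) := by
  refine A.homBullet_noeth_of_injections m id Function.injective_id
    (fun i => A.precompₗ eX.hom (Y⟦(ZMod.cast i : ℤ)⟧))
    (fun i a b hab => ?_) h
  have hab' : eX.hom ≫ a = eX.hom ≫ b := hab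
  have := congrArg (fun t => eX.inv ≫ t) hab'
  simpa only [Iso.inv_hom_id_assoc] using this

lemma noeth_smd_right {X Z K : C} (r' : Z ⟶ K) (k' : K ⟶ Z) (hrk : r' ≫ k' = 𝟙 Z)
    (h : IsNoetherian R (A.HomBullet m X K)) : IsNoetherian R (A.HomBullet m X Z) := by
  refine A.homBullet_noeth_of_injections m id Function.injective_id
    (fun i => A.postcompₗ X ((shiftFunctor C (ZMod.cast i : ℤ)).map r'))
    (fun i a b hab => ?_) h
  have hab' : a ≫ (shiftFunctor C (ZMod.cast i : ℤ)).map r'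
      = b ≫ (shiftFunctor C (ZMod.cast i : ℤ)).map r' := hab
  have := congrArg (fun t => t ≫ (shiftFunctor C (ZMod.cast i : ℤ)).map k') hab'
  simpa [← Functor.map_comp, hrk] using this

lemma noeth_smd_left {Z K Y : C} (r' : Z ⟶ K) (k' : K ⟶ Z) (hrk : r' ≫ k' = 𝟙 Z)
    (h : IsNoetherian R (A.HomBullet m K Y)) : IsNoetherian R (A.HomBullet m Z Y) := by
  refine A.homBullet_noeth_of_injections m id Function.injective_id
    (fun i => A.precompₗ k' (Y⟦(ZMod.cast i : ℤ)⟧))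
    (fun i a b hab => ?_) h
  have hab' : k' ≫ a = k' ≫ b := hab
  have := congrArg (fun t => r' ≫ t) hab'
  simpa only [← Category.assoc, hrk, Category.id_comp] using this

lemma noeth_shift_right (e0 : shiftFunctor C (m : ℤ) ≅ 𝟭 C) {X Y : C} (n : ℤ)
    (h : IsNoetherian R (A.HomBullet m X Y)) :
    IsNoetherian R (A.HomBullet m X (Y⟦n⟧)) := by
  have hiso : ∀ i : ZMod m,
      Nonempty (((Y⟦n⟧ : C)⟦(ZMod.cast i : ℤ)⟧ : C)
        ≅ Y⟦(ZMod.cast (i + (n : ZMod m)) : ℤ)⟧) := by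
    intro i
    obtain ⟨g⟩ := shiftObjIso e0
      (show ((n + (ZMod.cast i : ℤ) : ℤ) : ZMod m)
          = (((ZMod.cast (i + (n : ZMod m)) : ℤ)) : ZMod m) by
        push_cast [ZMod.intCast_cast, ZMod.cast_id]; ring) Y
    exact ⟨((shiftFunctorAdd C n (ZMod.cast i : ℤ)).app Y).symm ≪≫ g⟩
  refine A.homBullet_noeth_of_injections m (fun i => i + (n : ZMod m))
    (add_left_injective _)
    (fun i => A.postcompₗ X (hiso i).some.hom)
    (fun i a b hab => ?_) h
  have hab' : a ≫ (hiso i).some.hom = b ≫ (hiso i).some.hom := hab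
  have := congrArg (fun t => t ≫ (hiso i).some.inv) hab'
  simpa only [Category.assoc, Iso.hom_inv_id, Category.comp_id] using this

lemma noeth_shift_left (e0 : shiftFunctor C (m : ℤ) ≅ 𝟭 C) {X Y : C} (n : ℤ)
    (h : IsNoetherian R (A.HomBullet m X Y)) :
    IsNoetherian R (A.HomBullet m (X⟦n⟧) Y) := by
  have hiso : ∀ i : ZMod m,
      Nonempty ((((Y⟦(ZMod.cast i : ℤ)⟧ : C))⟦(-n : ℤ)⟧ : C)
        ≅ Y⟦(ZMod.cast (i - (n : ZMod m)) : ℤ)⟧) := by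
    intro i
    obtain ⟨g⟩ := shiftObjIso e0
      (show (((ZMod.cast i : ℤ) + (-n) : ℤ) : ZMod m)
          = (((ZMod.cast (i - (n : ZMod m)) : ℤ)) : ZMod m) by
        push_cast [ZMod.intCast_cast, ZMod.cast_id]; ring) Y
    exact ⟨((shiftFunctorAdd C (ZMod.cast i : ℤ) (-n)).app Y).symm ≪≫ g⟩
  letI : ∀ (Z W : C), Module R (Z ⟶ W) := fun Z W => A.homModule Z W
  refine A.homBullet_noeth_of_injections m (fun i => i - (n : ZMod m))
    (sub_left_injective)
    (fun i => (A.postcompₗ X (hiso i).some.hom).comp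
      (A.leftShiftEquivₗ X (Y⟦(ZMod.cast i : ℤ)⟧) n).toLinearMap)
    (fun i => ?_) h
  intro a b hab
  apply (A.leftShiftEquivₗ X (Y⟦(ZMod.cast i : ℤ)⟧) n).injective
  have hab' : ((A.leftShiftEquivₗ X (Y⟦(ZMod.cast i : ℤ)⟧) n) a) ≫ (hiso i).some.hom
      = ((A.leftShiftEquivₗ X (Y⟦(ZMod.cast i : ℤ)⟧) n) b) ≫ (hiso i).some.hom := hab
  have h2 := congrArg (fun t => t ≫ (hiso i).some.inv) hab'
  simpa only [Category.assoc, Iso.hom_inv_id, Category.comp_id] using h2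

lemma noeth_triangle_right {X : C} (T : Triangle C) (hT : T ∈ distTriang C)
    (h₁ : IsNoetherian R (A.HomBullet m X T.obj₁))
    (h₃ : IsNoetherian R (A.HomBullet m X T.obj₃)) :
    IsNoetherian R (A.HomBullet m X T.obj₂) := by
  letI : ∀ (Z : C), Module R (X ⟶ Z) := fun Z => A.homModule X Z
  have h₁' : IsNoetherian R (⨁ i : ZMod m, (X ⟶ T.obj₁⟦(ZMod.cast i : ℤ)⟧)) := h₁
  have h₃' : IsNoetherian R (⨁ i : ZMod m, (X ⟶ T.obj₃⟦(ZMod.cast i : ℤ)⟧)) := h₃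
  show IsNoetherian R (⨁ i : ZMod m, (X ⟶ T.obj₂⟦(ZMod.cast i : ℤ)⟧))
  refine isNoetherian_directSum_of_exact
    (fun i => A.postcompₗ X (((Triangle.shiftFunctor C (ZMod.cast i : ℤ)).obj T).mor₁))
    (fun i => A.postcompₗ X (((Triangle.shiftFunctor C (ZMod.cast i : ℤ)).obj T).mor₂))
    (fun i => ?_) h₁' h₃'
  have hT' := Triangle.shift_distinguished T hT (ZMod.cast i : ℤ)
  rw [Pretriangulated.Triangle.shiftFunctor_eq] at hT'
  apply le_antisymm
  · rintro φ ⟨ψ, rfl⟩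
    rw [LinearMap.mem_ker]
    show (ψ ≫ ((Triangle.shiftFunctor C (ZMod.cast i : ℤ)).obj T).mor₁)
      ≫ ((Triangle.shiftFunctor C (ZMod.cast i : ℤ)).obj T).mor₂ = 0
    rw [Category.assoc, comp_distTriang_mor_zero₁₂ _ hT', Limits.comp_zero]
  · intro φ hφ
    have hφ' : φ ≫ ((Triangle.shiftFunctor C (ZMod.cast i : ℤ)).obj T).mor₂ = 0 :=
      LinearMap.mem_ker.mp hφ
    obtain ⟨ψ, hψ⟩ := Triangle.coyoneda_exact₂ _ hT' φ hφ'
    exact ⟨ψ, hψ.symm⟩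

lemma noeth_triangle_left {Y : C} (T : Triangle C) (hT : T ∈ distTriang C)
    (h₁ : IsNoetherian R (A.HomBullet m T.obj₁ Y))
    (h₃ : IsNoetherian R (A.HomBullet m T.obj₃ Y)) :
    IsNoetherian R (A.HomBullet m T.obj₂ Y) := by
  letI : ∀ (Z W : C), Module R (Z ⟶ W) := fun Z W => A.homModule Z W
  have h₃' : IsNoetherian R (⨁ i : ZMod m, (T.obj₃ ⟶ Y⟦(ZMod.cast i : ℤ)⟧)) := h₃
  have h₁' : IsNoetherian R (⨁ i : ZMod m, (T.obj₁ ⟶ Y⟦(ZMod.cast i : ℤ)⟧)) := h₁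
  show IsNoetherian R (⨁ i : ZMod m, (T.obj₂ ⟶ Y⟦(ZMod.cast i : ℤ)⟧))
  refine isNoetherian_directSum_of_exact
    (fun i => A.precompₗ T.mor₂ (Y⟦(ZMod.cast i : ℤ)⟧))
    (fun i => A.precompₗ T.mor₁ (Y⟦(ZMod.cast i : ℤ)⟧))
    (fun i => ?_) h₃' h₁'
  apply le_antisymm
  · rintro φ ⟨ψ, rfl⟩
    rw [LinearMap.mem_ker]
    show T.mor₁ ≫ T.mor₂ ≫ ψ = 0
    rw [← Category.assoc, comp_distTriang_mor_zero₁₂ _ hT, Limits.zero_comp]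
  · intro φ hφ
    have hφ' : T.mor₁ ≫ φ = 0 := LinearMap.mem_ker.mp hφ
    obtain ⟨ψ, hψ⟩ := Triangle.yoneda_exact₂ _ hT φ hφ'
    exact ⟨ψ, hψ.symm⟩

lemma noeth_angleMem_right (e0 : shiftFunctor C (m : ℤ) ≅ 𝟭 C) (X : C) {I : Set C}
    (hI : ∀ Y ∈ I, IsNoetherian R (A.HomBullet m X Y)) :
    ∀ {Y : C}, angleMem I Y → IsNoetherian R (A.HomBullet m X Y) := by
  intro Y hY
  induction hY with
  | of hZ => exact hI _ hZ
  | zero hZ => exact A.noeth_zero_right m X hZ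
  | shift n _ ih => exact A.noeth_shift_right m e0 n ih
  | sum _ _ ihA ihB =>
      exact A.noeth_triangle_right m (binaryBiproductTriangle _ _)
        (binaryBiproductTriangle_distinguished _ _) ihA ihB
  | smd hsm _ ih =>
      obtain ⟨r', k', hrk⟩ := hsm
      exact A.noeth_smd_right m r' k' hrk ih
  | iso eIso _ ih => exact A.noeth_iso_right m eIso ih

lemma noeth_angleMem_left (e0 : shiftFunctor C (m : ℤ) ≅ 𝟭 C) (Y : C) {I : Set C}
    (hI : ∀ X ∈ I, IsNoetherian R (A.HomBullet m X Y)) :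
    ∀ {X : C}, angleMem I X → IsNoetherian R (A.HomBullet m X Y) := by
  intro X hX
  induction hX with
  | of hZ => exact hI _ hZ
  | zero hZ => exact A.noeth_zero_left m Y hZ
  | shift n _ ih => exact A.noeth_shift_left m e0 n ih
  | sum _ _ ihA ihB =>
      exact A.noeth_triangle_left m (binaryBiproductTriangle _ _)
        (binaryBiproductTriangle_distinguished _ _) ihA ihB
  | smd hsm _ ih =>
      obtain ⟨r', k', hrk⟩ := hsm
      exact A.noeth_smd_left m r' k' hrk ih
  | iso eIso _ ih => exact A.noeth_iso_left m eIso ih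

lemma noeth_angleN_right (e0 : shiftFunctor C (m : ℤ) ≅ 𝟭 C) (X G : C)
    (hG : IsNoetherian R (A.HomBullet m X G)) :
    ∀ (n : ℕ) (Y : C), Y ∈ angleN {G} n → IsNoetherian R (A.HomBullet m X Y) := by
  have hsing : ∀ Y ∈ ({G} : Set C), IsNoetherian R (A.HomBullet m X Y) := by
    intro Y hY
    rw [Set.mem_singleton_iff] at hY
    subst hY
    exact hG
  intro n
  induction n with
  | zero => intro Y hY; simp [angleN] at hY
  | succ n ih =>
      cases n with
      | zero =>
          intro Y hY
          exact A.noeth_angleMem_right m e0 X hsing hY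
      | succ k =>
          intro Y hY
          refine A.noeth_angleMem_right m e0 X ?_ hY
          rintro K ⟨K₀, K₁, f, g, h, hdist, hK₀, hK₁⟩
          exact A.noeth_triangle_right m _ hdist (ih K₀ hK₀)
            (A.noeth_angleMem_right m e0 X hsing hK₁)

lemma noeth_angleN_left (e0 : shiftFunctor C (m : ℤ) ≅ 𝟭 C) (Y G : C)
    (hG : IsNoetherian R (A.HomBullet m G Y)) :
    ∀ (n : ℕ) (X : C), X ∈ angleN {G} n → IsNoetherian R (A.HomBullet m X Y) := by
  have hsing : ∀ X ∈ ({G} : Set C), IsNoetherian R (A.HomBullet m X Y) := by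
    intro X hX
    rw [Set.mem_singleton_iff] at hX
    subst hX
    exact hG
  intro n
  induction n with
  | zero => intro X hX; simp [angleN] at hX
  | succ n ih =>
      cases n with
      | zero =>
          intro X hX
          exact A.noeth_angleMem_left m e0 Y hsing hX
      | succ k =>
          intro X hX
          refine A.noeth_angleMem_left m e0 Y ?_ hX
          rintro K ⟨K₀, K₁, f, g, h, hdist, hK₀, hK₁⟩
          exact A.noeth_triangle_left m _ hdist (ih K₀ hK₀)
            (A.noeth_angleMem_left m e0 Y hsing hK₁)

end CentralAction

end Auxiliary

/-- Let `C` be a `ℤ/m`-graded triangulated category (`1 ≤ m ≤ ∞`; here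
`m = 0` encodes `m = ∞`) and `R` a commutative Noetherian ring acting centrally on `C`.
If `G` is a split-generator of `C` such that `Hom^•(G, G)` is a Noetherian `R`-module,
then `Hom^•(X, Y)` is a Noetherian `R`-module for all objects `X, Y`. -/
theorem isNoetherian_hom_of_isNoetherian_generator
    [IsNoetherianRing R] (A : CentralAction (C := C) R) (m : ℕ)
    (hgr : Nonempty (shiftFunctor C (m : ℤ) ≅ 𝟭 C))
    (G : C) (hG : IsSplitGenerator G)
    (hN : IsNoetherian R (A.HomBullet m G G)) :
    ∀ X Y : C, IsNoetherian R (A.HomBullet m X Y) := by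
  obtain ⟨e0⟩ := hgr
  obtain ⟨n, hn⟩ := hG
  intro X Y
  have hGall : ∀ Z : C, IsNoetherian R (A.HomBullet m G Z) := fun Z =>
    A.noeth_angleN_right m e0 G G hN n Z (by rw [hn]; trivial)
  exact A.noeth_angleN_left m e0 Y G (hGall Y) n X (by rw [hn]; trivial)

end RouquierDim
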